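/- The rule RA□ preserves validity over Nelsonian conditional models: if the strong equivalence φ ⇔ ψ is valid in all Nelsonian conditional models, then so is (φ □→ χ) ⇔ (ψ □→ χ), for any formula χ. (Key step: validity of φ ⇔ ψ implies ‖φ‖_M = ‖ψ‖_M, i.e., both verification sets and falsification sets of φ and ψ coincide, in every model M.) -/
import Mathlib


inductive CForm : Type where
  | var : Nat → CForm
  | and : CForm → CForm → CForm
  | or  : CForm → CForm → CForm
  | neg : CForm → CForm
  | imp : CForm → CForm → CForm
  | cond : CForm → CForm → CForm

/-- A Nelsonian conditional model: a Nelsonian model together with a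
bi-set-indexed accessibility relation satisfying (c1) and (c2). -/
structure CNModel where
  W : Type
  le : W → W → Prop
  refl : ∀ w, le w w
  trans : ∀ {a b c}, le a b → le b c → le a c
  Vp : Nat → W → Prop
  Vn : Nat → W → Prop
  monoP : ∀ (n : Nat) {w v}, le w v → Vp n w → Vp n v
  monoN : ∀ (n : Nat) {w v}, le w v → Vn n w → Vn n v
  R : W → Set W × Set W → W → Prop
  c1 : ∀ (XY : Set W × Set W) {w w' v}, le w w' → R w XY v → ∃ v', R w' XY v' ∧ le v v'
  c2 : ∀ (XY : Set W × Set W) {w v v'}, R w XY v → le v v' → ∃ w', le w w' ∧ R w' XY v'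

/-- Verification (`true`) and falsification (`false`) in a Nelsonian conditional model. -/
def CNModel.sat (M : CNModel) : CForm → Bool → M.W → Prop
  | .var n, true, w => M.Vp n w
  | .var n, false, w => M.Vn n w
  | .and φ ψ, true, w => M.sat φ true w ∧ M.sat ψ true w
  | .and φ ψ, false, w => M.sat φ false w ∨ M.sat ψ false w
  | .or φ ψ, true, w => M.sat φ true w ∨ M.sat ψ true w
  | .or φ ψ, false, w => M.sat φ false w ∧ M.sat ψ false w
  | .neg φ, b, w => M.sat φ (!b) w
  | .imp φ ψ, true, w => ∀ v, M.le w v → M.sat φ true v → M.sat ψ true v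
  | .imp φ ψ, false, w => M.sat φ true w ∧ M.sat ψ false w
  | .cond φ ψ, true, w =>
      ∀ v u, M.le w v → M.R v ({x | M.sat φ true x}, {x | M.sat φ false x}) u →
        M.sat ψ true u
  | .cond φ ψ, false, w =>
      ∃ u, M.R w ({x | M.sat φ true x}, {x | M.sat φ false x}) u ∧ M.sat ψ false u

/-- N4CK-validity: verified at every world of every Nelsonian conditional model. -/
def CValid (φ : CForm) : Prop := ∀ (M : CNModel) (w : M.W), M.sat φ true w

/-- Strong implication for the conditional language. -/
def strImp (φ ψ : CForm) : CForm := .and (.imp φ ψ) (.imp (.neg ψ) (.neg φ))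

/-- Strong equivalence for the conditional language. -/
def strEquiv (φ ψ : CForm) : CForm := .and (strImp φ ψ) (strImp ψ φ)

/-- The rule (RA□) preserves N4CK-validity; the key step is that validity of
φ ⇔ ψ forces the bi-sets ‖φ‖ and ‖ψ‖ to coincide in every model. -/
theorem ra_box_valid (φ ψ χ : CForm) (h : CValid (strEquiv φ ψ)) :
    (∀ M : CNModel,
        (({x | M.sat φ true x}, {x | M.sat φ false x}) : Set M.W × Set M.W) =
        ({x | M.sat ψ true x}, {x | M.sat ψ false x})) ∧
    CValid (strEquiv (.cond φ χ) (.cond ψ χ)) := by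
  have key : ∀ M : CNModel,
      (({x | M.sat φ true x}, {x | M.sat φ false x}) : Set M.W × Set M.W) =
      ({x | M.sat ψ true x}, {x | M.sat ψ false x}) := by
    intro M
    have h1 : ∀ w : M.W, M.sat φ true w ↔ M.sat ψ true w := by
      intro w
      have hw := h M w
      obtain ⟨⟨a, b⟩, ⟨c, d⟩⟩ := hw
      exact ⟨fun hh => a w (M.refl w) hh, fun hh => c w (M.refl w) hh⟩
    have h2 : ∀ w : M.W, M.sat φ false w ↔ M.sat ψ false w := by
      intro w
      have hw := h M w
      obtain ⟨⟨a, b⟩, ⟨c, d⟩⟩ := hw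
      exact ⟨fun hh => d w (M.refl w) hh, fun hh => b w (M.refl w) hh⟩
    simp only [Prod.mk.injEq]
    constructor <;> ext x
    · exact h1 x
    · exact h2 x
  refine ⟨key, ?_⟩
  intro M w
  have hk := key M
  refine ⟨⟨?_, ?_⟩, ?_, ?_⟩ <;> intro v hv hs
  · intro u u' hle hr
    exact hs u u' hle (hk ▸ hr)
  · obtain ⟨u, hr, hu⟩ := hs
    exact ⟨u, hk ▸ hr, hu⟩
  · intro u u' hle hr
    exact hs u u' hle (hk ▸ hr)
  · obtain ⟨u, hr, hu⟩ := hs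
    exact ⟨u, hk ▸ hr, hu⟩
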